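/- For every integer n ≥ 0 and every k ∈ ℤ, the n-th coefficient of the formal power series ∑_{m=0}^{n} (-L(X))^m / (m! · (αm + a)^{k}) in ℂ⟦X⟧, where L(X) = ∑_{j≥1} (-1)^{j-1} X^j / j is the formal logarithm log(1+X), multiplied by n!, equals (-1)^n ∑_{m=0}^{n} [n m] · (αm + a)^{-k}. (Since L(X)^m has X-adic order m, the terms with m > n contribute nothing to the coefficient of X^n, so this finite sum computes the coefficient of X^n in the generating function Φ_f(-ln(1+t), k, α, a) of the two-parameter Hurwitz-Lerch type poly-Cauchy numbers of the second kind.) -/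

import Mathlib

open PowerSeries Finset

/-- Unsigned Stirling numbers of the first kind. -/
def stirling1 : ℕ → ℕ → ℕ
  | 0, 0 => 1
  | 0, _ + 1 => 0
  | _ + 1, 0 => 0
  | n + 1, m + 1 => stirling1 n m + n * stirling1 n (m + 1)

/-- Stirling numbers of the second kind. -/
def stirling2 : ℕ → ℕ → ℕ
  | 0, 0 => 1
  | 0, _ + 1 => 0
  | _ + 1, 0 => 0
  | n + 1, m + 1 => stirling2 n m + (m + 1) * stirling2 n (m + 1)

/-- Two-parameter Hurwitz-Lerch type poly-Bernoulli numbers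
    `B_n^{(k)}(α,a) = (-1)^n ∑_{m=0}^n (-1)^m m! {n m} (αm+a)^{-k}`. -/
noncomputable def polyBernoulli (k : ℤ) (α a : ℂ) (n : ℕ) : ℂ :=
  (-1 : ℂ) ^ n * ∑ m ∈ Finset.range (n + 1),
    (-1 : ℂ) ^ m * (m.factorial : ℂ) * (stirling2 n m : ℂ) * (α * m + a) ^ (-k)

/-- Two-parameter Hurwitz-Lerch type poly-Cauchy numbers of the first kind
    `c_n^{(k)}(α,a) = (-1)^n ∑_{m=0}^n (-1)^m [n m] (αm+a)^{-k}`. -/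
noncomputable def polyCauchy1 (k : ℤ) (α a : ℂ) (n : ℕ) : ℂ :=
  (-1 : ℂ) ^ n * ∑ m ∈ Finset.range (n + 1),
    (-1 : ℂ) ^ m * (stirling1 n m : ℂ) * (α * m + a) ^ (-k)

/-- Two-parameter Hurwitz-Lerch type poly-Cauchy numbers of the second kind
    `ĉ_n^{(k)}(α,a) = (-1)^n ∑_{m=0}^n [n m] (αm+a)^{-k}`. -/
noncomputable def polyCauchy2 (k : ℤ) (α a : ℂ) (n : ℕ) : ℂ :=
  (-1 : ℂ) ^ n * ∑ m ∈ Finset.range (n + 1),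
    (stirling1 n m : ℂ) * (α * m + a) ^ (-k)

/-- The formal power series `log(1+X) = ∑_{j≥1} (-1)^{j-1} X^j / j` in `ℂ⟦X⟧`. -/
noncomputable def formalLog : PowerSeries ℂ :=
  PowerSeries.mk fun j => if j = 0 then 0 else (-1 : ℂ) ^ (j - 1) / j

lemma coeff_dlog (n : ℕ) : coeff n (d⁄dX ℂ formalLog) = (-1 : ℂ) ^ n := by
  rw [coeff_derivative, formalLog, coeff_mk]
  simp only [Nat.succ_ne_zero, if_false, Nat.add_sub_cancel]
  push_cast
  rw [div_mul_cancel₀]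
  exact Nat.cast_add_one_ne_zero n

lemma onePlusX_mul_dlog : (1 + X) * (d⁄dX ℂ formalLog) = 1 := by
  ext n
  rw [add_mul, one_mul, map_add]
  cases n with
  | zero =>
    rw [coeff_dlog, coeff_zero_eq_constantCoeff, map_mul, constantCoeff_X, zero_mul]
    simp
  | succ n =>
    rw [coeff_succ_X_mul, coeff_dlog, coeff_dlog, coeff_one]
    simp [pow_succ]

lemma coeff_onePlusX_mul (F : ℂ⟦X⟧) (n : ℕ) :
    coeff n ((1 + X) * d⁄dX ℂ F) =
      ((n : ℂ) + 1) * coeff (n + 1) F + (n : ℂ) * coeff n F := by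
  rw [add_mul, one_mul, map_add, coeff_derivative]
  cases n with
  | zero =>
    rw [coeff_zero_eq_constantCoeff, map_mul, constantCoeff_X, zero_mul]
    push_cast; ring
  | succ n =>
    rw [coeff_succ_X_mul, coeff_derivative]
    push_cast; ring

lemma rec_key (n m : ℕ) :
    ((n : ℂ) + 1) * coeff (n + 1) (formalLog ^ (m + 1)) +
      (n : ℂ) * coeff n (formalLog ^ (m + 1)) =
    ((m : ℂ) + 1) * coeff n (formalLog ^ m) := by
  have h : (1 + X) * (d⁄dX ℂ (formalLog ^ (m + 1))) = ((m : ℂ) + 1) • formalLog ^ m := by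
    rw [Derivation.leibniz_pow, Nat.add_sub_cancel, smul_eq_mul,
      ← Nat.cast_smul_eq_nsmul ℂ, mul_smul_comm]
    push_cast
    congr 1
    rw [← mul_assoc, mul_comm (1 + X), mul_assoc, onePlusX_mul_dlog, mul_one]
  have := congrArg (coeff n) h
  rw [coeff_onePlusX_mul, map_smul, smul_eq_mul] at this
  exact this

lemma key (n : ℕ) : ∀ m : ℕ, (n.factorial : ℂ) * coeff n (formalLog ^ m) =
    (-1 : ℂ) ^ n * (-1 : ℂ) ^ m * (m.factorial : ℂ) * (stirling1 n m : ℂ) := by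
  induction n with
  | zero =>
    intro m
    cases m with
    | zero => simp [stirling1]
    | succ m =>
      have h0 : constantCoeff formalLog = 0 := by
        rw [formalLog, ← coeff_zero_eq_constantCoeff_apply, coeff_mk]; simp
      rw [coeff_zero_eq_constantCoeff, map_pow, h0]
      simp [stirling1]
  | succ n ih =>
    intro m
    cases m with
    | zero => simp [stirling1, coeff_one]
    | succ m =>
      have hrec := rec_key n m
      have hn : ((n + 1).factorial : ℂ) = ((n : ℂ) + 1) * (n.factorial : ℂ) := by
        push_cast [Nat.factorial_succ]; ring
      have hm : ((m + 1).factorial : ℂ) = ((m : ℂ) + 1) * (m.factorial : ℂ) := by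
        push_cast [Nat.factorial_succ]; ring
      have hs : (stirling1 (n + 1) (m + 1) : ℂ) =
          (stirling1 n m : ℂ) + (n : ℂ) * (stirling1 n (m + 1) : ℂ) := by
        show ((stirling1 n m + n * stirling1 n (m + 1) : ℕ) : ℂ) = _
        push_cast; ring
      have ih2 := ih (m + 1)
      rw [hm, pow_succ (-1 : ℂ) m] at ih2
      rw [hn, hm, hs, pow_succ (-1 : ℂ) n, pow_succ (-1 : ℂ) m]
      linear_combination (n.factorial : ℂ) * hrec + ((m : ℂ) + 1) * ih m -
        (n : ℂ) * ih2

theorem stmt2 (α a : ℂ) (hα : α ≠ 0) (ha : ∀ m : ℕ, α * m + a ≠ 0) (n : ℕ) (k : ℤ) :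
    (n.factorial : ℂ) * PowerSeries.coeff n
      (∑ m ∈ Finset.range (n + 1),
        PowerSeries.C (((m.factorial : ℂ) * (α * m + a) ^ k)⁻¹) * (-formalLog) ^ m) =
    (-1 : ℂ) ^ n * ∑ m ∈ Finset.range (n + 1),
      (stirling1 n m : ℂ) * (α * m + a) ^ (-k) := by
  rw [map_sum, Finset.mul_sum, Finset.mul_sum]
  apply Finset.sum_congr rfl
  intro m _
  have hneg : (-formalLog) ^ m = C ((-1 : ℂ) ^ m) * formalLog ^ m := by
    rw [neg_pow]; congr 1; simp [map_pow]
  rw [hneg, ← mul_assoc, ← map_mul, coeff_C_mul]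
  have hk := key n m
  have hf : (m.factorial : ℂ) ≠ 0 := Nat.cast_ne_zero.mpr m.factorial_ne_zero
  have hzk : (α * m + a) ^ k ≠ 0 := zpow_ne_zero k (ha m)
  have hsq : (-1 : ℂ) ^ m * (-1 : ℂ) ^ m = 1 := by rw [← mul_pow]; norm_num
  have h2 : (n.factorial : ℂ) *
      ((((m.factorial : ℂ) * (α * m + a) ^ k)⁻¹ * (-1) ^ m) * coeff n (formalLog ^ m)) =
      (((m.factorial : ℂ) * (α * m + a) ^ k)⁻¹ * (-1) ^ m) *
        ((n.factorial : ℂ) * coeff n (formalLog ^ m)) := by ring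
  rw [h2, hk, zpow_neg]
  field_simp
  linear_combination (stirling1 n m : ℂ) * hsq
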